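/- Fix τ > 0 and μ > 0 satisfying √μ + arctan(τ tanh τ/√μ) = (π/2)j for some positive integer j. Then the function φ(x) = √(μ/τ² + tanh²(τx)) · sin(√μ x + arctan(τ tanh(τx)/√μ) + (π/2)j) satisfies φ'' + λ e^u φ + μ φ = 0 on (-1,1) and φ(−1) = φ(1) = 0, where λ = 2τ²/cosh²(τ) and u(x) = 2 log(cosh τ/cosh(τx)). -/

import Mathlib

open Real Set

private lemma my_hasDerivAt_tanh (x : ℝ) :
    HasDerivAt Real.tanh (1 - Real.tanh x ^ 2) x := by
  have hc := (Real.cosh_pos x).ne'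
  have h := (Real.hasDerivAt_sinh x).div (Real.hasDerivAt_cosh x) hc
  have hfun : Real.tanh = fun y => Real.sinh y / Real.cosh y :=
    funext fun y => Real.tanh_eq_sinh_div_cosh y
  have hd : (Real.cosh x * Real.cosh x - Real.sinh x * Real.sinh x) / Real.cosh x ^ 2
      = 1 - Real.tanh x ^ 2 := by
    rw [Real.tanh_eq_sinh_div_cosh]
    field_simp
  rw [← hd, hfun]
  exact h

private lemma phase_lemma (τ μ s θ : ℝ) (hτ : 0 < τ) (hμ : 0 < μ) :
    Real.sqrt (μ / τ ^ 2 + s ^ 2) * Real.sin (θ + Real.arctan (τ * s / Real.sqrt μ)) =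
    Real.sqrt μ / τ * Real.sin θ + s * Real.cos θ := by
  have hm : (0:ℝ) < Real.sqrt μ := Real.sqrt_pos.2 hμ
  have hm2 : Real.sqrt μ ^ 2 = μ := Real.sq_sqrt hμ.le
  set z := τ * s / Real.sqrt μ with hz
  have key : Real.sqrt (μ / τ ^ 2 + s ^ 2) / Real.sqrt (1 + z ^ 2) = Real.sqrt μ / τ := by
    rw [← Real.sqrt_div (by positivity)]
    have harg : (μ / τ ^ 2 + s ^ 2) / (1 + z ^ 2) = μ / τ ^ 2 := by
      rw [hz]
      field_simp
      linear_combination (τ ^ 2 * s ^ 2) * hm2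
    rw [harg, Real.sqrt_div hμ.le, Real.sqrt_sq hτ.le]
  have hB : (0:ℝ) < Real.sqrt (1 + z ^ 2) := Real.sqrt_pos.2 (by positivity)
  have e1 : Real.sqrt (μ / τ ^ 2 + s ^ 2) * (1 / Real.sqrt (1 + z ^ 2)) = Real.sqrt μ / τ := by
    rw [mul_one_div, key]
  have e2 : Real.sqrt (μ / τ ^ 2 + s ^ 2) * (z / Real.sqrt (1 + z ^ 2)) = s := by
    have : Real.sqrt (μ / τ ^ 2 + s ^ 2) * (z / Real.sqrt (1 + z ^ 2))
        = (Real.sqrt (μ / τ ^ 2 + s ^ 2) / Real.sqrt (1 + z ^ 2)) * z := by ring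
    rw [this, key, hz]
    field_simp
  rw [Real.sin_add, Real.cos_arctan, Real.sin_arctan]
  calc Real.sqrt (μ / τ ^ 2 + s ^ 2) *
        (Real.sin θ * (1 / Real.sqrt (1 + z ^ 2)) + Real.cos θ * (z / Real.sqrt (1 + z ^ 2)))
      = (Real.sqrt (μ / τ ^ 2 + s ^ 2) * (1 / Real.sqrt (1 + z ^ 2))) * Real.sin θ
        + (Real.sqrt (μ / τ ^ 2 + s ^ 2) * (z / Real.sqrt (1 + z ^ 2))) * Real.cos θ := by ring
    _ = Real.sqrt μ / τ * Real.sin θ + s * Real.cos θ := by rw [e1, e2]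

theorem eigenfunction_positive_eigenvalue (τ μ : ℝ) (hτ : 0 < τ) (hμ : 0 < μ)
    (j : ℕ) (hj : 1 ≤ j)
    (heq : Real.sqrt μ + Real.arctan (τ * Real.tanh τ / Real.sqrt μ) = Real.pi / 2 * (j : ℝ))
    (lam : ℝ) (hlam : lam = 2 * τ ^ 2 / Real.cosh τ ^ 2)
    (u : ℝ → ℝ) (hu : ∀ x, u x = 2 * Real.log (Real.cosh τ / Real.cosh (τ * x)))
    (φ : ℝ → ℝ)
    (hφ : ∀ x, φ x = Real.sqrt (μ / τ ^ 2 + Real.tanh (τ * x) ^ 2) *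
      Real.sin (Real.sqrt μ * x + Real.arctan (τ * Real.tanh (τ * x) / Real.sqrt μ) +
        Real.pi / 2 * (j : ℝ))) :
    (∀ x ∈ Set.Ioo (-1 : ℝ) 1,
      deriv (deriv φ) x + lam * Real.exp (u x) * φ x + μ * φ x = 0) ∧
    φ (-1) = 0 ∧ φ 1 = 0 := by
  set m := Real.sqrt μ with hmdef
  have hm : (0:ℝ) < m := Real.sqrt_pos.2 hμ
  have hm2 : m ^ 2 = μ := Real.sq_sqrt hμ.le
  set c := Real.pi / 2 * (j : ℝ) with hcdef
  set g : ℝ → ℝ := fun x => m / τ * Real.sin (m * x + c)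
      + Real.tanh (τ * x) * Real.cos (m * x + c) with hgdef
  have hφg : φ = g := by
    funext x
    rw [hφ, hgdef]
    have harg : m * x + Real.arctan (τ * Real.tanh (τ * x) / m) + c
        = (m * x + c) + Real.arctan (τ * Real.tanh (τ * x) / m) := by ring
    rw [harg, phase_lemma τ μ _ _ hτ hμ]
  -- derivative of tanh (τ x)
  have ht : ∀ x : ℝ, HasDerivAt (fun y => Real.tanh (τ * y))
      (τ * (1 - Real.tanh (τ * x) ^ 2)) x := by
    intro x
    have h1 : HasDerivAt (fun y : ℝ => τ * y) τ x := by
      simpa using (hasDerivAt_id x).const_mul τ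
    have := (my_hasDerivAt_tanh (τ * x)).comp x h1
    exact this.congr_deriv (by ring)
  have hψ : ∀ x : ℝ, HasDerivAt (fun y => m * y + c) m x := by
    intro x
    simpa using ((hasDerivAt_id x).const_mul m).add_const c
  have hsin : ∀ x : ℝ, HasDerivAt (fun y => Real.sin (m * y + c))
      (Real.cos (m * x + c) * m) x := fun x => (Real.hasDerivAt_sin _).comp x (hψ x)
  have hcos : ∀ x : ℝ, HasDerivAt (fun y => Real.cos (m * y + c))
      (-Real.sin (m * x + c) * m) x := fun x => (Real.hasDerivAt_cos _).comp x (hψ x)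
  set g1 : ℝ → ℝ := fun x => (μ / τ + τ * (1 - Real.tanh (τ * x) ^ 2)) * Real.cos (m * x + c)
      - m * Real.tanh (τ * x) * Real.sin (m * x + c) with hg1def
  have hg1 : ∀ x : ℝ, HasDerivAt g (g1 x) x := by
    intro x
    have h := ((hsin x).const_mul (m / τ)).add ((ht x).mul (hcos x))
    refine h.congr_deriv ?_
    rw [hg1def, ← hm2]
    ring
  set g2 : ℝ → ℝ := fun x =>
      -((2 * τ ^ 2 * Real.tanh (τ * x) * (1 - Real.tanh (τ * x) ^ 2) + μ * Real.tanh (τ * x))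
        * Real.cos (m * x + c))
      - (μ * m / τ + 2 * m * τ * (1 - Real.tanh (τ * x) ^ 2)) * Real.sin (m * x + c)
      with hg2def
  have hg2 : ∀ x : ℝ, HasDerivAt g1 (g2 x) x := by
    intro x
    have ht2 : HasDerivAt (fun y => Real.tanh (τ * y) ^ 2)
        ((2 : ℕ) * Real.tanh (τ * x) ^ 1 * (τ * (1 - Real.tanh (τ * x) ^ 2))) x :=
      (ht x).pow 2
    have hcoef : HasDerivAt (fun y => μ / τ + τ * (1 - Real.tanh (τ * y) ^ 2))
        (τ * (0 - (2 : ℕ) * Real.tanh (τ * x) ^ 1 * (τ * (1 - Real.tanh (τ * x) ^ 2)))) x := by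
      exact (((hasDerivAt_const x (1:ℝ)).sub ht2).const_mul τ).const_add (μ / τ)
    have h := (hcoef.mul (hcos x)).sub ((((ht x).const_mul m)).mul (hsin x))
    refine h.congr_deriv ?_
    rw [hg2def, ← hm2]
    try push_cast
    try ring
  have hd1 : deriv φ = g1 := by
    funext y
    rw [hφg]
    exact (hg1 y).deriv
  have htc : ∀ y : ℝ, 1 - Real.tanh y ^ 2 = 1 / Real.cosh y ^ 2 := by
    intro y
    have hc := (Real.cosh_pos y).ne'
    rw [Real.tanh_eq_sinh_div_cosh]
    field_simp
    try nlinarith [Real.cosh_sq y]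
  refine ⟨?_, ?_, ?_⟩
  · intro x _
    have hdd : deriv (deriv φ) x = g2 x := by
      rw [hd1]; exact (hg2 x).deriv
    have hexp : Real.exp (u x) = (Real.cosh τ / Real.cosh (τ * x)) ^ 2 := by
      rw [hu x]
      have hr : (0:ℝ) < Real.cosh τ / Real.cosh (τ * x) :=
        div_pos (Real.cosh_pos τ) (Real.cosh_pos (τ * x))
      rw [show (2:ℝ) * Real.log (Real.cosh τ / Real.cosh (τ * x))
          = Real.log ((Real.cosh τ / Real.cosh (τ * x)) ^ 2) by
            rw [Real.log_pow]; norm_num,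
        Real.exp_log (by positivity)]
    rw [hdd, hexp, hφg, hlam, hg2def, hgdef]
    have hchτ := (Real.cosh_pos τ).ne'
    have hchx := (Real.cosh_pos (τ * x)).ne'
    simp only [htc (τ * x)]
    field_simp
    ring
  · rw [hφ]
    have harg : m * (-1) + Real.arctan (τ * Real.tanh (τ * (-1)) / m) + c = 0 := by
      rw [show τ * (-1) = -τ by ring, Real.tanh_neg,
        show τ * -Real.tanh τ / m = -(τ * Real.tanh τ / m) by ring, Real.arctan_neg]
      linarith [heq]
    rw [harg, Real.sin_zero, mul_zero]
  · rw [hφ]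
    have harg : m * 1 + Real.arctan (τ * Real.tanh (τ * 1) / m) + c = (j : ℝ) * Real.pi := by
      rw [mul_one, mul_one]
      have hc2 : c = Real.pi / 2 * (j : ℝ) := rfl
      linarith [heq, hc2]
    rw [harg, Real.sin_nat_mul_pi, mul_zero]
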